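/- Let A ∈ R^{n×n} (n ≥ 2) be a block matrix A = [[B, b],[−cᵀ, 0]] where B ∈ R^{(n−1)×(n−1)} is a P₀-matrix, b > 0 and c > 0 componentwise. Then every solution x of LCP(0, A) (i.e. x ≥ 0, Ax ≥ 0, xᵀAx = 0) has x_i = 0 for all i < n; that is, x = (0,…,0,t)ᵀ for some t ≥ 0, and for such x, Aᵀx ≤ 0. -/

import Mathlib

/-- B is a P₀-matrix: all principal minors are nonnegative. -/
def IsP0Matrix {m : ℕ} (B : Matrix (Fin m) (Fin m) ℝ) : Prop :=
  ∀ s : Finset (Fin m),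
    0 ≤ (B.submatrix (fun i : s => (i : Fin m)) (fun j : s => (j : Fin m))).det

theorem stmt16 {m : ℕ} (hm : 1 ≤ m)
    (A : Matrix (Fin (m + 1)) (Fin (m + 1)) ℝ)
    (B : Matrix (Fin m) (Fin m) ℝ) (b c : Fin m → ℝ)
    (hB : IsP0Matrix B) (hb : ∀ i, 0 < b i) (hc : ∀ j, 0 < c j)
    (hblk₁ : ∀ i j : Fin m, A i.castSucc j.castSucc = B i j)
    (hblk₂ : ∀ i : Fin m, A i.castSucc (Fin.last m) = b i)
    (hblk₃ : ∀ j : Fin m, A (Fin.last m) j.castSucc = -c j)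
    (hblk₄ : A (Fin.last m) (Fin.last m) = 0) :
    ∀ x : Fin (m + 1) → ℝ, 0 ≤ x → 0 ≤ A.mulVec x →
      dotProduct x (A.mulVec x) = 0 →
      (∀ i : Fin m, x i.castSucc = 0) ∧
      (∃ t : ℝ, 0 ≤ t ∧ x = fun i => if i = Fin.last m then t else 0) ∧
      A.transpose.mulVec x ≤ 0 := by
  intro x hx hAx hdot
  have hlast : A.mulVec x (Fin.last m) =
      -∑ j : Fin m, c j * x j.castSucc := by
    simp only [Matrix.mulVec, dotProduct]
    rw [Fin.sum_univ_castSucc]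
    simp only [hblk₃, hblk₄, zero_mul, add_zero, neg_mul,
      ← Finset.sum_neg_distrib, neg_neg]
  have hterm : ∀ j : Fin m, 0 ≤ c j * x j.castSucc := fun j =>
    mul_nonneg (hc j).le (hx _)
  have hsum0 : ∑ j : Fin m, c j * x j.castSucc = 0 := by
    have h1 : 0 ≤ -∑ j : Fin m, c j * x j.castSucc := hlast ▸ hAx (Fin.last m)
    have h2 : 0 ≤ ∑ j : Fin m, c j * x j.castSucc :=
      Finset.sum_nonneg fun j _ => hterm j
    linarith
  have hzero : ∀ i : Fin m, x i.castSucc = 0 := by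
    intro i
    have := (Finset.sum_eq_zero_iff_of_nonneg (fun j _ => hterm j)).mp hsum0
      i (Finset.mem_univ i)
    exact (mul_eq_zero.mp this).resolve_left (hc i).ne'
  refine ⟨hzero, ⟨x (Fin.last m), hx _, ?_⟩, ?_⟩
  · funext i
    refine Fin.lastCases ?_ ?_ i
    · simp
    · intro j
      simp [Fin.castSucc_lt_last j |>.ne, hzero j]
  · intro i
    have hT : A.transpose.mulVec x i = A (Fin.last m) i * x (Fin.last m) := by
      simp only [Matrix.mulVec, dotProduct, Matrix.transpose_apply]
      rw [Fin.sum_univ_castSucc]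
      simp [hzero]
    rw [hT]
    refine Fin.lastCases ?_ ?_ i
    · simp [hblk₄]
    · intro j
      rw [hblk₃ j]
      have := mul_nonneg (hc j).le (hx (Fin.last m))
      simpa using neg_nonpos_of_nonneg this
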